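/- Let G be an unmixed graph as in the setup. If G contains a 4-cycle C_{ij} (edges x_iy_i, y_ix_j, x_jy_j, y_jx_i) for some i < j, then the complementary simplicial complex Δ(G) (the independence complex of G) is not strongly connected. -/

import Mathlib

open SimpleGraph

/-- `C` is a vertex cover of `G`. -/
def IsVC {V : Type*} (G : SimpleGraph V) (C : Set V) : Prop :=
  ∀ ⦃u v : V⦄, G.Adj u v → u ∈ C ∨ v ∈ C

/-- `C` is a minimal (inclusion-wise) vertex cover of `G`. -/
def IsMinVC {V : Type*} (G : SimpleGraph V) (C : Set V) : Prop :=
  IsVC G C ∧ ∀ C' : Set V, C' ⊆ C → IsVC G C' → C' = C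

/-- `A` is an independent set of `G`. -/
def IsIndep {V : Type*} (G : SimpleGraph V) (A : Set V) : Prop :=
  ∀ ⦃u v : V⦄, u ∈ A → v ∈ A → ¬ G.Adj u v

/-- `A` is a maximal independent set of `G`. -/
def IsMaxIndep {V : Type*} (G : SimpleGraph V) (A : Set V) : Prop :=
  IsIndep G A ∧ ∀ A' : Set V, A ⊆ A' → IsIndep G A' → A' = A

/-- `G` is unmixed: all minimal vertex covers have the same cardinality. -/
def Unmixed {V : Type*} (G : SimpleGraph V) : Prop :=
  ∀ C₁ C₂ : Set V, IsMinVC G C₁ → IsMinVC G C₂ → C₁.ncard = C₂.ncard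

/-- Vertex type with the two classes `X = {x_1,…,x_n}` (left) and `Y = {y_1,…,y_n}` (right). -/
abbrev VT (n : ℕ) := Fin n ⊕ Fin n

/-- The vertex `x_i`. -/
def xv {n : ℕ} (i : Fin n) : VT n := Sum.inl i

/-- The vertex `y_i`. -/
def yv {n : ℕ} (i : Fin n) : VT n := Sum.inr i

/-- The 4-cycle `C_{ij}` (edges `x_iy_i, y_ix_j, x_jy_j, y_jx_i`) is contained in `G`. -/
def HasC2 {n : ℕ} (G : SimpleGraph (VT n)) (i j : Fin n) : Prop :=
  G.Adj (xv i) (yv i) ∧ G.Adj (yv i) (xv j) ∧ G.Adj (xv j) (yv j) ∧ G.Adj (yv j) (xv i)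

/-- The `2r`-cycle `C_{i_1…i_r}` given by `f : Fin r → Fin n` is contained in `G`:
edges `x_{f s} y_{f s}` and `y_{f s} x_{f (s+1)}` (cyclically). -/
def IsCycleIn {n r : ℕ} (G : SimpleGraph (VT n)) (f : Fin r → Fin n) : Prop :=
  ∀ s : Fin r, G.Adj (xv (f s)) (yv (f s)) ∧ G.Adj (yv (f s)) (xv (f (finRotate r s)))

/-- The independence complex `Δ(G)` is strongly connected: any two facets (maximal
independent sets, all of cardinality `n`) are joined by a chain of facets in which
consecutive facets meet in `n - 1` vertices. -/
def StronglyConnectedIndep {n : ℕ} (G : SimpleGraph (VT n)) : Prop :=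
  ∀ F F' : Set (VT n), IsMaxIndep G F → IsMaxIndep G F' →
    ∃ (m : ℕ) (f : ℕ → Set (VT n)), f 0 = F ∧ f m = F' ∧
      (∀ i ≤ m, IsMaxIndep G (f i)) ∧ ∀ i < m, (f i ∩ f (i + 1)).ncard = n - 1

lemma compl_indep_of_vc {V : Type*} {G : SimpleGraph V} {C : Set V} (h : IsVC G C) :
    IsIndep G Cᶜ := by
  intro u v hu hv hadj
  rcases h hadj with h' | h' <;> [exact hu h'; exact hv h']

lemma compl_minvc_of_maxindep {V : Type*} {G : SimpleGraph V} {A : Set V}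
    (h : IsMaxIndep G A) : IsMinVC G Aᶜ := by
  constructor
  · intro u v hadj
    by_contra hcon
    push_neg at hcon
    simp only [Set.mem_compl_iff, not_not] at hcon
    exact h.1 hcon.1 hcon.2 hadj
  · intro C' hsub hvc
    have hA : A ⊆ C'ᶜ := by
      intro v hv hv'
      exact (Set.notMem_compl_iff.mpr hv) (hsub hv')
    have := h.2 C'ᶜ hA (compl_indep_of_vc hvc)
    rw [← this, compl_compl]

lemma maxindep_ncard {n : ℕ} {G : SimpleGraph (VT n)}
    (hX : IsMinVC G (Set.range (xv : Fin n → VT n))) (hu : Unmixed G)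
    {A : Set (VT n)} (h : IsMaxIndep G A) : A.ncard = n := by
  have h1 : Aᶜ.ncard = (Set.range (xv : Fin n → VT n)).ncard :=
    hu _ _ (compl_minvc_of_maxindep h) hX
  have h2 : (Set.range (xv : Fin n → VT n)).ncard = n := by
    rw [← Nat.card_coe_set_eq,
      Nat.card_range_of_injective (f := (xv : Fin n → VT n))
        (fun a b h => Sum.inl_injective h)]
    simp
  have h3 : A.ncard + Aᶜ.ncard = Nat.card (VT n) := Set.ncard_add_ncard_compl A
  have h4 : Nat.card (VT n) = n + n := by simp [Nat.card_eq_fintype_card]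
  omega

lemma exactly_one {n : ℕ} {G : SimpleGraph (VT n)}
    (hm : ∀ i : Fin n, G.Adj (xv i) (yv i))
    {A : Set (VT n)} (hind : IsIndep G A) (hcard : A.ncard = n) (k : Fin n) :
    (xv k ∈ A ∧ yv k ∉ A) ∨ (yv k ∈ A ∧ xv k ∉ A) := by
  have hboth : ¬ (xv k ∈ A ∧ yv k ∈ A) := fun ⟨h1, h2⟩ => hind h1 h2 (hm k)
  have hone : xv k ∈ A ∨ yv k ∈ A := by
    set p : VT n → Fin n := Sum.elim id id with hp
    have hinj : Set.InjOn p A := by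
      intro u hu v hv huv
      by_contra hne
      have : G.Adj u v := by
        rcases u with a | a <;> rcases v with b | b <;>
          simp only [hp, Sum.elim_inl, Sum.elim_inr, id] at huv <;> subst huv
        · exact absurd rfl hne
        · exact hm a
        · exact (hm a).symm
        · exact absurd rfl hne
      exact hind hu hv this
    have himg : (p '' A).ncard = n := by
      rw [Set.ncard_image_of_injOn hinj, hcard]
    have huniv : p '' A = Set.univ := by
      refine (Set.eq_of_subset_of_ncard_le (Set.subset_univ (p '' A)) ?_ Set.finite_univ)
      rw [himg, Set.ncard_univ, Nat.card_eq_fintype_card, Fintype.card_fin]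
    have : k ∈ p '' A := huniv ▸ Set.mem_univ k
    rcases this with ⟨v, hv, hpv⟩
    rcases v with a | a <;>
      simp only [hp, Sum.elim_inl, Sum.elim_inr, id] at hpv <;> subst hpv
    · exact Or.inl hv
    · exact Or.inr hv
  rcases hone with h | h
  · exact Or.inl ⟨h, fun h' => hboth ⟨h, h'⟩⟩
  · exact Or.inr ⟨h, fun h' => hboth ⟨h', h⟩⟩

lemma exists_maxindep_mem {n : ℕ} (G : SimpleGraph (VT n)) (v : VT n) :
    ∃ A : Set (VT n), IsMaxIndep G A ∧ v ∈ A := by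
  have hS : ({A : Set (VT n) | IsIndep G A ∧ v ∈ A}).Finite := Set.toFinite _
  have hne : ({A : Set (VT n) | IsIndep G A ∧ v ∈ A}).Nonempty := by
    refine ⟨{v}, ?_, rfl⟩
    intro a b ha hb hadj
    rw [Set.mem_singleton_iff] at ha hb
    subst ha; subst hb
    exact G.irrefl hadj
  obtain ⟨A, hA, hmax⟩ := hS.exists_maximalFor Set.ncard _ hne
  refine ⟨A, ⟨hA.1, ?_⟩, hA.2⟩
  intro A' hsub hind
  have hA' : A' ∈ {A : Set (VT n) | IsIndep G A ∧ v ∈ A} := ⟨hind, hsub hA.2⟩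
  have hle : A.ncard ≤ A'.ncard := Set.ncard_le_ncard hsub A'.toFinite
  have heq := le_antisymm hle (hmax hA' hle)
  exact (Set.eq_of_subset_of_ncard_le hsub heq.ge).symm

/-- If the unmixed graph `G` (setup (*)) contains a 4-cycle `C_{ij}` for some `i < j`,
then `Δ(G)` is not strongly connected. -/
theorem C2_not_strongly_connected {n : ℕ} (G : SimpleGraph (VT n))
    (hni : ∀ v : VT n, ∃ u : VT n, G.Adj u v)
    (hX : IsMinVC G (Set.range (xv : Fin n → VT n)))
    (hY : IsMaxIndep G (Set.range (yv : Fin n → VT n)))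
    (hm : ∀ i : Fin n, G.Adj (xv i) (yv i))
    (hht : ∀ C : Set (VT n), IsVC G C → n ≤ C.ncard)
    (hu : Unmixed G)
    (i j : Fin n) (hij : i < j) (hC : HasC2 G i j) :
    ¬ StronglyConnectedIndep G := by
  intro hsc
  obtain ⟨F', hF', hxi⟩ := exists_maxindep_mem G (xv i)
  obtain ⟨m, f, hf0, hfm, hfacet, hchain⟩ := hsc (Set.range yv) F' hY hF'
  have hn2 : 2 ≤ n := by
    have := j.isLt
    have := hij
    omega
  have hne_ij : i ≠ j := Fin.ne_of_lt hij
  -- key invariant along the chain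
  have key : ∀ t, t ≤ m → yv i ∈ f t ∧ yv j ∈ f t := by
    intro t
    induction t with
    | zero => intro _; rw [hf0]; exact ⟨⟨i, rfl⟩, ⟨j, rfl⟩⟩
    | succ t ih =>
      intro ht
      have ht' : t ≤ m := Nat.le_of_succ_le ht
      obtain ⟨hyi, hyj⟩ := ih ht'
      have hFt := hfacet t ht'
      have hFt1 := hfacet (t + 1) ht
      have hcardt := maxindep_ncard hX hu hFt
      have hcardt1 := maxindep_ncard hX hu hFt1
      have heone := fun k => exactly_one hm hFt1.1 hcardt1 k
      have hcut := hchain t (Nat.lt_of_succ_le ht)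
      -- f (t+1) cannot contain x_i nor x_j
      have hnotx : xv i ∉ f (t + 1) ∧ xv j ∉ f (t + 1) := by
        by_contra hcon
        push_neg at hcon
        -- if x_i ∈ f(t+1) then y_j ∉ via edge y_j x_i, so x_j ∈; similarly
        have hboth : xv i ∈ f (t + 1) ∧ xv j ∈ f (t + 1) := by
          rcases Classical.em (xv i ∈ f (t + 1)) with h1 | h1
          · refine ⟨h1, ?_⟩
            rcases heone j with ⟨h2, _⟩ | ⟨h2, _⟩
            · exact h2
            · exact absurd hC.2.2.2 (hFt1.1 h2 h1)
          · refine absurd ?_ h1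
            have h2 := hcon h1
            rcases heone i with ⟨h3, _⟩ | ⟨h3, _⟩
            · exact h3
            · exact absurd hC.2.1 (hFt1.1 h3 h2)
        -- then y_i, y_j ∉ f (t+1), so intersection misses two elements of f t
        have hyi' : yv i ∉ f (t + 1) := fun h => hFt1.1 hboth.1 h (hm i)
        have hyj' : yv j ∉ f (t + 1) := fun h => hFt1.1 hboth.2 h (hm j)
        have hsub : (f t ∩ f (t + 1)) ∪ {yv i, yv j} ⊆ f t := by
          intro v hv
          rcases hv with hv | hv
          · exact hv.1
          · rcases hv with hv | hv <;> subst hv <;> assumption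
        have hdisj : Disjoint (f t ∩ f (t + 1)) {yv i, yv j} := by
          rw [Set.disjoint_right]
          intro v hv
          rcases hv with hv | hv <;> subst hv <;>
            exact fun h => (by first | exact hyi' h.2 | exact hyj' h.2)
        have hle := Set.ncard_le_ncard hsub (f t).toFinite
        rw [Set.ncard_union_eq hdisj (Set.toFinite _) (Set.toFinite _), hcut,
          hcardt] at hle
        have h2card : ({yv i, yv j} : Set (VT n)).ncard = 2 := by
          rw [Set.ncard_pair]
          exact fun h => hne_ij (by simpa [yv] using h)
        omega
      rcases heone i with ⟨h1, _⟩ | ⟨h1, _⟩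
      · exact absurd h1 hnotx.1
      · rcases heone j with ⟨h2, _⟩ | ⟨h2, _⟩
        · exact absurd h2 hnotx.2
        · exact ⟨h1, h2⟩
  have := (key m le_rfl).1
  rw [hfm] at this
  exact hF'.1 hxi this (hm i)
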